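/- arXiv:1601.06905 — 2 statements merged into one kernel-verified Lean document; each statement's English description precedes it below -/
import Mathlib

section
/- (Reduction of the third Bianchi–Padova relation in semi-metric geometry.) Let L be a connection on Ω, g a metric on Ω with lowered curvature R, and suppose the non-metricity of (L,g) has the semi-metric form Q_{kij} = Q_k g_{ij} for a smooth covector field Q_k : Ω → ℝ³. Then for all indices i,j,k,l and all points of Ω, (1/2)(∂_i Q_j − ∂_j Q_i) g_{kl} = (1/2)(R_{ijkl} + R_{ijlk}). -/
noncomputable section

/-- Points of ℝ³. -/
abbrev E3 := Fin 3 → ℝ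

/-- Partial derivative of `f` along the `j`-th coordinate at `x`. -/
def pd (f : E3 → ℝ) (j : Fin 3) (x : E3) : ℝ :=
  fderiv ℝ f x (Pi.single j 1)

/-- A connection coefficient field: `L x i j k = L^i_{jk}(x)`. -/
abbrev Conn := E3 → Fin 3 → Fin 3 → Fin 3 → ℝ

/-- Smoothness of a connection on `Ω`. -/
def ConnSmooth (L : Conn) (Ω : Set E3) : Prop :=
  ∀ i j k, ContDiffOn ℝ (⊤ : ℕ∞) (fun x => L x i j k) Ω

/-- Torsion of a connection: `torsion L x i j k = T_{jk}^i = (1/2)(L^i_{jk} - L^i_{kj})`. -/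
def torsion (L : Conn) (x : E3) (i j k : Fin 3) : ℝ :=
  (L x i j k - L x i k j) / 2

/-- Curvature of a connection: `curv L x p j i q = R_{jiq}^p`. -/
def curv (L : Conn) (x : E3) (p j i q : Fin 3) : ℝ :=
  pd (fun y => L y p i q) j x - pd (fun y => L y p j q) i x
    + ∑ h, (L x h i q * L x p j h - L x h j q * L x p i h)

/-- A metric field. -/
abbrev Metric := E3 → Matrix (Fin 3) (Fin 3) ℝ

/-- `g` is a metric on `Ω`: smooth entries, symmetric and positive definite on `Ω`. -/
def MetricOn (g : Metric) (Ω : Set E3) : Prop :=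
  (∀ i j, ContDiffOn ℝ (⊤ : ℕ∞) (fun x => g x i j) Ω) ∧
  (∀ x ∈ Ω, (g x).IsSymm) ∧ (∀ x ∈ Ω, (g x).PosDef)

/-- Non-metricity of `(L, g)`: `nm L g x k i j = Q_{kij}`. -/
def nm (L : Conn) (g : Metric) (x : E3) (k i j : Fin 3) : ℝ :=
  - pd (fun y => g y i j) k x + ∑ p, (L x p k j * g x i p + L x p k i * g x j p)

/-- Lowered curvature: `lcurv L g x i j k l = R_{ijkl} = g_{lp} R_{ijk}^p`. -/
def lcurv (L : Conn) (g : Metric) (x : E3) (i j k l : Fin 3) : ℝ :=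
  ∑ p, g x l p * curv L x p i j k

lemma pd_add {f g : E3 → ℝ} {x : E3} (hf : DifferentiableAt ℝ f x)
    (hg : DifferentiableAt ℝ g x) (i : Fin 3) :
    pd (fun y => f y + g y) i x = pd f i x + pd g i x := by
  simp [pd, fderiv_fun_add hf hg]

lemma pd_sub {f g : E3 → ℝ} {x : E3} (hf : DifferentiableAt ℝ f x)
    (hg : DifferentiableAt ℝ g x) (i : Fin 3) :
    pd (fun y => f y - g y) i x = pd f i x - pd g i x := by
  simp [pd, fderiv_fun_sub hf hg]

lemma pd_mul {f g : E3 → ℝ} {x : E3} (hf : DifferentiableAt ℝ f x)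
    (hg : DifferentiableAt ℝ g x) (i : Fin 3) :
    pd (fun y => f y * g y) i x = pd f i x * g x + f x * pd g i x := by
  simp [pd, fderiv_fun_mul hf hg]; ring

lemma pd_sum {f : Fin 3 → E3 → ℝ} {x : E3}
    (hf : ∀ p, DifferentiableAt ℝ (f p) x) (i : Fin 3) :
    pd (fun y => ∑ p, f p y) i x = ∑ p, pd (f p) i x := by
  simp [pd, fderiv_fun_sum (fun p _ => hf p)]

lemma le_coe_top {n : ℕ} [n.AtLeastTwo] :
    (OfNat.ofNat n : WithTop ℕ∞) ≤ ((⊤:ℕ∞):WithTop ℕ∞) := by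
  rw [show (OfNat.ofNat n : WithTop ℕ∞) = ((OfNat.ofNat n:ℕ∞):WithTop ℕ∞) from by norm_cast]
  exact WithTop.coe_le_coe.mpr le_top

lemma one_le_coe_top : (1 : WithTop ℕ∞) ≤ ((⊤:ℕ∞):WithTop ℕ∞) := by
  rw [show (1 : WithTop ℕ∞) = ((1:ℕ∞):WithTop ℕ∞) from by norm_cast]
  exact WithTop.coe_le_coe.mpr le_top

lemma pd_symm {f : E3 → ℝ} {x : E3} (hf : ContDiffAt ℝ (⊤:ℕ∞) f x) (i j : Fin 3) :
    pd (fun y => pd f j y) i x = pd (fun y => pd f i y) j x := by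
  have hd : DifferentiableAt ℝ (fderiv ℝ f) x :=
    (hf.fderiv_right (m := 1) (by rw [show ((1:WithTop ℕ∞)+1) = (2:WithTop ℕ∞) from by norm_num]; exact le_coe_top)).differentiableAt one_ne_zero
  have hsymm : IsSymmSndFDerivAt ℝ f x := hf.isSymmSndFDerivAt (by rw [minSmoothness_of_isRCLikeNormedField]; exact le_coe_top)
  have key : ∀ v w : E3,
      fderiv ℝ (fun y => fderiv ℝ f y v) x w = fderiv ℝ (fderiv ℝ f) x w v := by
    intro v w
    rw [fderiv_clm_apply hd (differentiableAt_const v)]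
    simp
  simp only [pd]
  rw [key, key]
  exact hsymm _ _

/-- Reduction of the third Bianchi–Padova relation in semi-metric geometry:
if `Q_{kij} = Q_k g_{ij}` then `Q_{[j,i]} g_{kl} = R_{ij(kl)}`. -/
theorem semi_metric_third_bianchi (Ω : Set E3) (hΩ : IsOpen Ω) (hne : Ω.Nonempty)
    (L : Conn) (hL : ConnSmooth L Ω) (g : Metric) (hg : MetricOn g Ω)
    (Qv : E3 → Fin 3 → ℝ) (hQv : ∀ k, ContDiffOn ℝ (⊤ : ℕ∞) (fun x => Qv x k) Ω)
    (hsemi : ∀ x ∈ Ω, ∀ k i j : Fin 3, nm L g x k i j = Qv x k * g x i j) :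
    ∀ x ∈ Ω, ∀ i j k l : Fin 3,
      (1 / 2) * (pd (fun y => Qv y j) i x - pd (fun y => Qv y i) j x) * g x k l
        = (1 / 2) * (lcurv L g x i j k l + lcurv L g x i j l k) := by
  intro x hx i j k l
  obtain ⟨hgs, hgsymm, _⟩ := hg
  have hmem : Ω ∈ nhds x := hΩ.mem_nhds hx
  have hLx : ∀ p a b, DifferentiableAt ℝ (fun z => L z p a b) x := fun p a b =>
    ((hL p a b).contDiffAt hmem).differentiableAt (by simp)
  have hgx : ∀ a b, DifferentiableAt ℝ (fun z => g z a b) x := fun a b =>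
    ((hgs a b).contDiffAt hmem).differentiableAt (by simp)
  have hQx : ∀ a, DifferentiableAt ℝ (fun z => Qv z a) x := fun a =>
    ((hQv a).contDiffAt hmem).differentiableAt (by simp)
  -- the metricity equation on Ω
  have hE : ∀ y ∈ Ω, ∀ a b c : Fin 3, pd (fun z => g z a b) c y
      = (∑ p, (L y p c b * g y a p + L y p c a * g y b p)) - Qv y c * g y a b := by
    intro y hy a b c
    have h := hsemi y hy c a b
    unfold nm at h
    linarith
  -- the right-hand side functions
  set F : Fin 3 → E3 → ℝ := fun b y =>
    (∑ p, (L y p b l * g y k p + L y p b k * g y l p)) - Qv y b * g y k l with hF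
  -- derivative of F b along a at x
  have hFpd : ∀ a b : Fin 3, pd (F b) a x
      = (∑ p, (pd (fun z => L z p b l) a x * g x k p + L x p b l * pd (fun z => g z k p) a x
          + (pd (fun z => L z p b k) a x * g x l p + L x p b k * pd (fun z => g z l p) a x)))
        - (pd (fun z => Qv z b) a x * g x k l + Qv x b * pd (fun z => g z k l) a x) := by
    intro a b
    have h1 : ∀ p : Fin 3,
        DifferentiableAt ℝ (fun y => L y p b l * g y k p + L y p b k * g y l p) x :=
      fun p => ((hLx p b l).mul (hgx k p)).add ((hLx p b k).mul (hgx l p))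
    rw [hF]
    rw [pd_sub (DifferentiableAt.fun_sum fun p _ => h1 p) ((hQx b).fun_mul (hgx k l)),
      pd_sum h1, pd_mul (hQx b) (hgx k l)]
    congr 1
    refine Finset.sum_congr rfl fun p _ => ?_
    rw [pd_add ((hLx p b l).fun_mul (hgx k p)) ((hLx p b k).fun_mul (hgx l p)),
      pd_mul (hLx p b l) (hgx k p), pd_mul (hLx p b k) (hgx l p)]
  -- symmetry of second derivatives transferred through hE
  have hFd : ∀ b : Fin 3,
      (fun z => fderiv ℝ (fun w => g w k l) z (Pi.single b 1)) =ᶠ[nhds x] F b := by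
    intro b
    filter_upwards [hmem] with y hy
    exact hE y hy k l b
  have hswap : pd (F j) i x = pd (F i) j x := by
    have h1 : pd (fun y => pd (fun w => g w k l) j y) i x = pd (F j) i x := by
      simp only [pd]
      rw [(hFd j).fderiv_eq]
    have h2 : pd (fun y => pd (fun w => g w k l) i y) j x = pd (F i) j x := by
      simp only [pd]
      rw [(hFd i).fderiv_eq]
    rw [← h1, pd_symm ((hgs k l).contDiffAt hmem) i j, h2]
  have hBig := hswap
  rw [hFpd i j, hFpd j i] at hBig
  have hEx := hE x hx
  simp only [hEx, Fin.sum_univ_three] at hBig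
  have hsy : ∀ a b : Fin 3, g x b a = g x a b := fun a b => (hgsymm x hx).apply a b
  simp only [hsy 0 1, hsy 0 2, hsy 1 2] at hBig
  unfold lcurv curv
  simp only [Fin.sum_univ_three]
  linear_combination -hBig/2
end
end

section
/- Let L be a connection on Ω and g a metric on Ω with non-metricity Q and lowered curvature R, and suppose there is a smooth field q : Ω → Sym(3,ℝ) of symmetric 3×3 matrices with Q_{kij} = −2∇_k q_{ij} on Ω, where ∇_k q_{ij} := ∂_k q_{ij} − L^p_{ki} q_{pj} − L^p_{kj} q_{ip}. Then for all indices i,j,k,l and all points of Ω, − R_{jikm} q^m_l − R_{jilm} q^m_k = (1/2)(R_{ijkl} + R_{ijlk}), where q^m_k := g^{im} q_{ik}. -/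
noncomputable section

/-- Covariant derivative of a symmetric tensor field `q`:
`covq L q k i j x = ∇_k q_{ij}`. -/
def covq (L : Conn) (q : E3 → Matrix (Fin 3) (Fin 3) ℝ) (k i j : Fin 3) (x : E3) : ℝ :=
  pd (fun y => q y i j) k x - ∑ p, (L x p k i * q x p j + L x p k j * q x i p)

/-- Raised-index quasi-plastic strain `q^m_k = g^{im} q_{ik}`. -/
def qUp (g : Metric) (q : E3 → Matrix (Fin 3) (Fin 3) ℝ) (x : E3) (m k : Fin 3) : ℝ :=
  ∑ i, (g x)⁻¹ i m * q x i k

lemma diffAt_of_cdOn {f : E3 → ℝ} {Ω : Set E3} (hΩ : IsOpen Ω)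
    (hf : ContDiffOn ℝ (⊤ : ℕ∞) f Ω) {x : E3} (hx : x ∈ Ω) :
    DifferentiableAt ℝ f x :=
  ((hf.contDiffAt (hΩ.mem_nhds hx)).differentiableAt (by simp))

lemma pd_congr {f g : E3 → ℝ} {x : E3} (h : f =ᶠ[nhds x] g) (j : Fin 3) :
    pd f j x = pd g j x := by
  unfold pd; rw [Filter.EventuallyEq.fderiv_eq h]

lemma pd_sub_two_mul (f g : E3 → ℝ) (x : E3) (j : Fin 3)
    (hf : DifferentiableAt ℝ f x) (hg : DifferentiableAt ℝ g x) :
    pd (fun y => f y - 2 * g y) j x = pd f j x - 2 * pd g j x := by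
  unfold pd
  rw [fderiv_fun_sub hf (by exact (differentiableAt_const 2).mul hg), fderiv_const_mul hg]
  simp

lemma pd_sum_mul_add (A B C D : Fin 3 → E3 → ℝ) (x : E3) (j : Fin 3)
    (hA : ∀ p, DifferentiableAt ℝ (A p) x) (hB : ∀ p, DifferentiableAt ℝ (B p) x)
    (hC : ∀ p, DifferentiableAt ℝ (C p) x) (hD : ∀ p, DifferentiableAt ℝ (D p) x) :
    pd (fun y => ∑ p, (A p y * B p y + C p y * D p y)) j x
      = ∑ p, (pd (A p) j x * B p x + A p x * pd (B p) j x
          + (pd (C p) j x * D p x + C p x * pd (D p) j x)) := by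
  unfold pd
  have hd : ∀ p ∈ Finset.univ, HasFDerivAt (fun y => A p y * B p y + C p y * D p y)
      (A p x • fderiv ℝ (B p) x + B p x • fderiv ℝ (A p) x
        + (C p x • fderiv ℝ (D p) x + D p x • fderiv ℝ (C p) x)) x := fun p _ =>
    (((hA p).hasFDerivAt.mul (hB p).hasFDerivAt)).add
      (((hC p).hasFDerivAt.mul (hD p).hasFDerivAt))
  rw [(HasFDerivAt.fun_sum hd).fderiv]
  simp [ContinuousLinearMap.sum_apply]
  exact Finset.sum_congr rfl fun p _ => by ring

lemma pd_comm {f : E3 → ℝ} {Ω : Set E3} (hΩ : IsOpen Ω)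
    (hf : ContDiffOn ℝ (⊤ : ℕ∞) f Ω) {x : E3} (hx : x ∈ Ω) (i j : Fin 3) :
    pd (fun y => pd f i y) j x = pd (fun y => pd f j y) i x := by
  have hfx : ContDiffAt ℝ (⊤ : ℕ∞) f x := hf.contDiffAt (hΩ.mem_nhds hx)
  have hf' : DifferentiableAt ℝ (fderiv ℝ f) x :=
    (hfx.fderiv_right (m := 1) (by norm_cast)).differentiableAt one_ne_zero
  have hev : ∀ᶠ y in nhds x, HasFDerivAt f (fderiv ℝ f y) y := by
    filter_upwards [hΩ.mem_nhds hx] with y hy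
    exact (diffAt_of_cdOn hΩ hf hy).hasFDerivAt
  have hsym := second_derivative_symmetric_of_eventually hev hf'.hasFDerivAt
    (Pi.single j 1) (Pi.single i 1)
  have key : ∀ a b : Fin 3, pd (fun y => pd f a y) b x
      = (fderiv ℝ (fderiv ℝ f) x (Pi.single b 1)) (Pi.single a 1) := by
    intro a b
    unfold pd
    rw [fderiv_clm_apply hf' (differentiableAt_const _)]
    simp
  rw [key i j, key j i, hsym]

lemma hpar_lemma {Ω : Set E3} (hΩ : IsOpen Ω) {L : Conn} {g : Metric} (hg : MetricOn g Ω)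
    {q : E3 → Matrix (Fin 3) (Fin 3) ℝ}
    (hqsmooth : ∀ i j, ContDiffOn ℝ (⊤ : ℕ∞) (fun x => q x i j) Ω)
    (hrep : ∀ x ∈ Ω, ∀ k i j : Fin 3, nm L g x k i j = -2 * covq L q k i j x) :
    ∀ x ∈ Ω, ∀ k a b : Fin 3, pd (fun y => g y a b - 2 * q y a b) k x
      = ∑ p, (L x p k a * (g x p b - 2 * q x p b) + L x p k b * (g x a p - 2 * q x a p)) := by
  intro x hx k a b
  have h1 := hrep x hx k a b
  unfold nm covq at h1
  have hgd := diffAt_of_cdOn hΩ (hg.1 a b) hx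
  have hqd := diffAt_of_cdOn hΩ (hqsmooth a b) hx
  rw [pd_sub_two_mul _ _ _ _ hgd hqd]
  have hgs : ∀ u v : Fin 3, g x u v = g x v u := fun u v => (hg.2.1 x hx).apply v u
  simp only [Fin.sum_univ_three] at h1 ⊢
  rw [hgs b 0, hgs b 1, hgs b 2] at h1
  linear_combination -h1

lemma key_lemma {Ω : Set E3} (hΩ : IsOpen Ω) {L : Conn} (hL : ConnSmooth L Ω)
    {g : Metric} (hg : MetricOn g Ω)
    {q : E3 → Matrix (Fin 3) (Fin 3) ℝ}
    (hqsmooth : ∀ i j, ContDiffOn ℝ (⊤ : ℕ∞) (fun x => q x i j) Ω)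
    (hqsym : ∀ x ∈ Ω, (q x).IsSymm)
    (hrep : ∀ x ∈ Ω, ∀ k i j : Fin 3, nm L g x k i j = -2 * covq L q k i j x) :
    ∀ x ∈ Ω, ∀ i j k l : Fin 3,
      (∑ p, curv L x p j i k * (g x p l - 2 * q x p l))
        + (∑ p, curv L x p j i l * (g x k p - 2 * q x k p)) = 0 := by
  have Par := hpar_lemma hΩ hg hqsmooth hrep
  intro x hx i j k l
  have Hcd : ∀ a b : Fin 3, ContDiffOn ℝ (⊤ : ℕ∞) (fun y => g y a b - 2 * q y a b) Ω :=
    fun a b => (hg.1 a b).sub (contDiffOn_const.mul (hqsmooth a b))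
  have Hd : ∀ a b : Fin 3, DifferentiableAt ℝ (fun y => g y a b - 2 * q y a b) x :=
    fun a b => diffAt_of_cdOn hΩ (Hcd a b) hx
  have Ld : ∀ p a b : Fin 3, DifferentiableAt ℝ (fun y => L y p a b) x :=
    fun p a b => diffAt_of_cdOn hΩ (hL p a b) hx
  have mkD : ∀ u v : Fin 3,
      pd (fun y => pd (fun z => g z k l - 2 * q z k l) u y) v x
        = ∑ p, (pd (fun y => L y p u k) v x * (g x p l - 2 * q x p l)
            + L x p u k * pd (fun y => g y p l - 2 * q y p l) v x
            + (pd (fun y => L y p u l) v x * (g x k p - 2 * q x k p)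
            + L x p u l * pd (fun y => g y k p - 2 * q y k p) v x)) := by
    intro u v
    have hev : (fun y => pd (fun z => g z k l - 2 * q z k l) u y) =ᶠ[nhds x]
        (fun y => ∑ p, (L y p u k * (g y p l - 2 * q y p l)
          + L y p u l * (g y k p - 2 * q y k p))) := by
      filter_upwards [hΩ.mem_nhds hx] with y hy
      simpa using Par y hy u k l
    have e2 := pd_sum_mul_add (fun p z => L z p u k) (fun p z => g z p l - 2 * q z p l)
      (fun p z => L z p u l) (fun p z => g z k p - 2 * q z k p) x v
      (fun p => Ld p u k) (fun p => Hd p l) (fun p => Ld p u l) (fun p => Hd k p)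
    exact (pd_congr hev v).trans e2
  have S : pd (fun y => pd (fun z => g z k l - 2 * q z k l) i y) j x
      = pd (fun y => pd (fun z => g z k l - 2 * q z k l) j y) i x :=
    pd_comm hΩ (Hcd k l) hx i j
  have D1 := mkD i j
  have D2 := mkD j i
  have hgs : ∀ u v : Fin 3, g x u v = g x v u := fun u v => (hg.2.1 x hx).apply v u
  have hqs : ∀ u v : Fin 3, q x u v = q x v u := fun u v => (hqsym x hx).apply v u
  simp only [Par x hx, Fin.sum_univ_three, hgs 1 0, hgs 2 0, hgs 2 1,
    hqs 1 0, hqs 2 0, hqs 2 1] at D1 D2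
  simp only [curv, Fin.sum_univ_three, hgs 1 0, hgs 2 0, hgs 2 1,
    hqs 1 0, hqs 2 0, hqs 2 1]
  linear_combination S - D1 + D2

lemma contract_lemma {g : Metric} {q : E3 → Matrix (Fin 3) (Fin 3) ℝ} {x : E3}
    (hinv : (g x)⁻¹ * g x = 1) (c : Fin 3 → ℝ) (b : Fin 3) :
    (∑ m, (∑ p, g x m p * c p) * (∑ a, (g x)⁻¹ a m * q x a b)) = ∑ p, c p * q x p b := by
  have hδ : ∀ a p : Fin 3, (∑ m, (g x)⁻¹ a m * g x m p) = if a = p then 1 else 0 := by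
    intro a p
    have := congrFun (congrFun hinv a) p
    simpa [Matrix.mul_apply, Matrix.one_apply] using this
  have E00 := hδ 0 0; have E01 := hδ 0 1; have E02 := hδ 0 2
  have E10 := hδ 1 0; have E11 := hδ 1 1; have E12 := hδ 1 2
  have E20 := hδ 2 0; have E21 := hδ 2 1; have E22 := hδ 2 2
  simp [Fin.sum_univ_three] at E00 E01 E02 E10 E11 E12 E20 E21 E22 ⊢
  linear_combination (c 0 * q x 0 b) * E00 + (c 1 * q x 0 b) * E01 + (c 2 * q x 0 b) * E02
    + (c 0 * q x 1 b) * E10 + (c 1 * q x 1 b) * E11 + (c 2 * q x 1 b) * E12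
    + (c 0 * q x 2 b) * E20 + (c 1 * q x 2 b) * E21 + (c 2 * q x 2 b) * E22

/-- Inserting `Q_{kij} = -2∇_k q_{ij}` into the third Bianchi–Padova relation gives
`-R_{jikm} q^m_l - R_{jilm} q^m_k = R_{ij(kl)}`. -/
theorem quasi_plastic_strain_curvature_identity
    (Ω : Set E3) (hΩ : IsOpen Ω) (hne : Ω.Nonempty)
    (L : Conn) (hL : ConnSmooth L Ω) (g : Metric) (hg : MetricOn g Ω)
    (q : E3 → Matrix (Fin 3) (Fin 3) ℝ)
    (hqsmooth : ∀ i j, ContDiffOn ℝ (⊤ : ℕ∞) (fun x => q x i j) Ω)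
    (hqsym : ∀ x ∈ Ω, (q x).IsSymm)
    (hrep : ∀ x ∈ Ω, ∀ k i j : Fin 3, nm L g x k i j = -2 * covq L q k i j x) :
    ∀ x ∈ Ω, ∀ i j k l : Fin 3,
      -(∑ m, lcurv L g x j i k m * qUp g q x m l)
        - (∑ m, lcurv L g x j i l m * qUp g q x m k)
        = (1 / 2) * (lcurv L g x i j k l + lcurv L g x i j l k) := by

  intro x hx i j k l
  have hkey := key_lemma hΩ hL hg hqsmooth hqsym hrep x hx i j k l
  have hPD : (g x).PosDef := hg.2.2 x hx
  have hinv : (g x)⁻¹ * g x = 1 :=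
    Matrix.nonsing_inv_mul _ (isUnit_iff_ne_zero.mpr (ne_of_gt hPD.det_pos))
  have h1 := contract_lemma (q := q) hinv (fun p => curv L x p j i k) l
  have h2 := contract_lemma (q := q) hinv (fun p => curv L x p j i l) k
  have hgs : ∀ u v : Fin 3, g x u v = g x v u := fun u v => (hg.2.1 x hx).apply v u
  have hqs : ∀ u v : Fin 3, q x u v = q x v u := fun u v => (hqsym x hx).apply v u
  simp only [lcurv, qUp, curv, Fin.sum_univ_three, hgs l 0, hgs l 1, hgs l 2,
    hqs k 0, hqs k 1, hqs k 2] at h1 h2 hkey ⊢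
  linear_combination -h1 - h2 + (1/2) * hkey
end
end
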